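/- Let X and Y be finite nonempty sets and let f, f' : X → Y with f surjective. Suppose α, β, γ, δ are positive reals such that the number of y ∈ Y for which there exists y' ∈ Y with |L_f(y) ∩ L_{f'}(y')| ≥ α is at most β·|Y|, and γ ≤ |L_f(y)| ≤ δ for every y ∈ Y. Then F(ρ_f, ρ_{f'})² ≤ α²·|Y|²/(γ·|X|) + β·δ·|Y|/|X|. -/

import Mathlib

open Matrix BigOperators
open scoped ComplexOrder

/-- The positive semidefinite square root of a matrix (zero if the matrix is
not positive semidefinite). -/
noncomputable def msqrt {n : Type*} [Fintype n] [DecidableEq n]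
    (A : Matrix n n ℂ) : Matrix n n ℂ :=
  letI := Classical.dec A.PosSemidef
  if h : A.PosSemidef then
    (h.1.eigenvectorUnitary : Matrix n n ℂ) * diagonal (((↑) : ℝ → ℂ) ∘ Real.sqrt ∘ h.1.eigenvalues) *
      (star h.1.eigenvectorUnitary : Matrix n n ℂ) else 0

/-- The fidelity `F(ρ,σ) = tr √(√ρ σ √ρ)` of two (positive semidefinite) matrices. -/
noncomputable def fidelity {n : Type*} [Fintype n] [DecidableEq n]
    (ρ σ : Matrix n n ℂ) : ℝ :=
  ((msqrt (msqrt ρ * σ * msqrt ρ)).trace).re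

/-- The hiding state `ρ_f` of a function `f : X → Y`:
`(ρ_f)_{x,x'} = 1/|X|` if `f x = f x'` and `0` otherwise. -/
noncomputable def hidingState {X Y : Type*} [Fintype X] [DecidableEq Y]
    (f : X → Y) : Matrix X X ℂ :=
  Matrix.of fun x x' => if f x = f x' then (1 : ℂ) / (Fintype.card X) else 0

open scoped MatrixOrder in
lemma msqrt_eq_cfc {n : Type*} [Fintype n] [DecidableEq n]
    {A : Matrix n n ℂ} (hA : A.PosSemidef) : msqrt A = CFC.sqrt A := by
  rw [CFC.sqrt_eq_real_sqrt A (Matrix.nonneg_iff_posSemidef.mpr hA), cfcₙ_eq_cfc, hA.1.cfc_eq]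
  simp only [msqrt, dif_pos hA, IsHermitian.cfc, Unitary.conjStarAlgAut_apply]
  rfl

open scoped MatrixOrder in
lemma msqrt_psd {n : Type*} [Fintype n] [DecidableEq n]
    {A : Matrix n n ℂ} (hA : A.PosSemidef) : (msqrt A).PosSemidef := by
  rw [msqrt_eq_cfc hA]; exact Matrix.nonneg_iff_posSemidef.mp (CFC.sqrt_nonneg A)

open scoped MatrixOrder in
lemma msqrt_mul_self {n : Type*} [Fintype n] [DecidableEq n]
    {A : Matrix n n ℂ} (hA : A.PosSemidef) : msqrt A * msqrt A = A := by
  rw [msqrt_eq_cfc hA]; exact CFC.sqrt_mul_sqrt_self A (Matrix.nonneg_iff_posSemidef.mpr hA)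

open scoped MatrixOrder in
lemma msqrt_eq {n : Type*} [Fintype n] [DecidableEq n]
    {A B : Matrix n n ℂ} (hB : B.PosSemidef) (hAB : B ^ 2 = A) : msqrt A = B := by
  have hA : A.PosSemidef := hAB ▸ (hB.pow 2)
  rw [msqrt_eq_cfc hA]
  exact CFC.sqrt_unique (by rw [← pow_two]; exact hAB) (Matrix.nonneg_iff_posSemidef.mpr hB)

lemma psd_diag_re_nonneg {n : Type*} [Fintype n] [DecidableEq n]
    {B : Matrix n n ℂ} (hB : B.PosSemidef) (y : n) : 0 ≤ (B y y).re := by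
  exact (Complex.le_def.mp hB.diag_nonneg).1

lemma trace_msqrt_re_nonneg {n : Type*} [Fintype n] [DecidableEq n]
    {G : Matrix n n ℂ} (hG : G.PosSemidef) : 0 ≤ ((msqrt G).trace).re := by
  rw [Matrix.trace, Complex.re_sum]
  exact Finset.sum_nonneg fun y _ => psd_diag_re_nonneg (msqrt_psd hG) y

lemma trace_msqrt_le {n : Type*} [Fintype n] [DecidableEq n]
    {G : Matrix n n ℂ} (hG : G.PosSemidef) :
    ((msqrt G).trace).re ≤ ∑ y, Real.sqrt (G y y).re := by
  have hmsq : msqrt G = msqrt G := rfl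
  set B := msqrt G with hBdef
  have hB : B.PosSemidef := msqrt_psd hG
  have hB2 : B * B = G := msqrt_mul_self hG
  rw [hmsq, Matrix.trace, Complex.re_sum]
  refine Finset.sum_le_sum fun y _ => ?_
  have hdiag : (G y y).re = ∑ k, Complex.normSq (B y k) := by
    rw [← hB2, Matrix.mul_apply, Complex.re_sum]
    refine Finset.sum_congr rfl fun k _ => ?_
    rw [← hB.isHermitian.apply k y,
      show star (B y k) = (starRingEnd ℂ) (B y k) from rfl, Complex.mul_conj,
      Complex.ofReal_re]
  have h1 : ((B y y).re) ^ 2 ≤ (G y y).re := by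
    rw [hdiag]
    calc ((B y y).re) ^ 2 ≤ Complex.normSq (B y y) := by
          rw [Complex.normSq_apply]; nlinarith [sq_nonneg (B y y).im]
      _ ≤ ∑ k, Complex.normSq (B y k) :=
          Finset.single_le_sum (fun k _ => Complex.normSq_nonneg _) (Finset.mem_univ y)
  calc (B y y).re = Real.sqrt (((B y y).re) ^ 2) :=
        (Real.sqrt_sq (psd_diag_re_nonneg hB y)).symm
    _ ≤ Real.sqrt (G y y).re := Real.sqrt_le_sqrt h1

/-- `cm f r` is the `X × Y` matrix with entry `r y` at `(x,y)` when `f x = y`, else `0`. -/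
noncomputable def cm {X Y : Type*} [DecidableEq Y] (f : X → Y) (r : Y → ℝ) : Matrix X Y ℂ :=
  Matrix.of fun x y => if f x = y then (r y : ℂ) else 0

section cmlemmas

variable {X Y Z : Type*} [Fintype X] [Fintype Y] [DecidableEq X] [DecidableEq Y]

lemma cm_mul_conjTranspose_cm (f g : X → Y) (a b : Y → ℝ) (x x' : X) :
    (cm f a * (cm g b)ᴴ) x x'
      = if f x = g x' then ((a (f x) : ℂ) * (b (f x) : ℂ)) else 0 := by
  rw [Matrix.mul_apply]
  rw [Finset.sum_eq_single (f x)]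
  · simp only [cm, conjTranspose_apply, Matrix.of_apply, if_pos rfl]
    by_cases h : f x = g x'
    · rw [if_pos h.symm, if_pos h]; simp
    · rw [if_neg (fun hc : g x' = f x => h hc.symm), if_neg h]; simp
  · intro y _ hy
    simp only [cm, conjTranspose_apply, Matrix.of_apply]
    rw [if_neg (fun h : f x = y => hy h.symm)]
    simp
  · simp

lemma conjTranspose_cm_mul_cm (f g : X → Y) (a b : Y → ℝ) (y y' : Y) :
    ((cm f a)ᴴ * cm g b) y y'
      = ((a y : ℂ) * (b y' : ℂ)) *
          ((Finset.univ.filter (fun x : X => f x = y ∧ g x = y')).card : ℂ) := by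
  rw [Matrix.mul_apply]
  have h1 : ∀ x : X, ((cm f a)ᴴ y x) * ((cm g b) x y')
      = if f x = y ∧ g x = y' then ((a y : ℂ) * (b y' : ℂ)) else 0 := by
    intro x
    simp only [cm, conjTranspose_apply, Matrix.of_apply, apply_ite (star : ℂ → ℂ),
      star_zero, Complex.star_def, Complex.conj_ofReal]
    by_cases h : f x = y <;> by_cases h' : g x = y' <;> simp [h, h']
  simp only [h1]
  rw [Finset.sum_ite, Finset.sum_const, Finset.sum_const]
  simp [mul_comm]

lemma cm_mul_apply (f : X → Y) (a : Y → ℝ) (N : Matrix Y Z ℂ) (x : X) (z : Z) :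
    (cm f a * N) x z = (a (f x) : ℂ) * N (f x) z := by
  rw [Matrix.mul_apply]
  rw [Finset.sum_eq_single (f x)]
  · simp [cm]
  · intro y _ hy
    simp only [cm, Matrix.of_apply]
    rw [if_neg (fun h : f x = y => hy h.symm)]
    simp
  · simp

end cmlemmas

section mainlemma

variable {X Y : Type*} [Fintype X] [Fintype Y] [DecidableEq X] [DecidableEq Y]

lemma fidelity_hiding_le [Nonempty X] (f f' : X → Y) (hf : Function.Surjective f) :
    0 ≤ fidelity (hidingState f) (hidingState f') ∧
    fidelity (hidingState f) (hidingState f') ≤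
      ∑ y : Y, Real.sqrt (∑ y' : Y,
        (((Finset.univ.filter (fun x : X => f x = y ∧ f' x = y')).card : ℝ)
          / (Fintype.card X : ℝ)) ^ 2) := by
  classical
  set nn : ℝ := (Fintype.card X : ℝ) with hnn
  have hnpos : 0 < nn := by
    simp only [hnn]; exact_mod_cast Fintype.card_pos
  set ℓ : Y → ℕ := fun y => (Finset.univ.filter (fun x : X => f x = y)).card with hℓ
  have hℓpos : ∀ y, 0 < ℓ y := by
    intro y
    obtain ⟨x, hx⟩ := hf y
    exact Finset.card_pos.mpr ⟨x, by simp [hℓ, hx]⟩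
  set c : Y → Y → ℕ :=
    fun y y' => (Finset.univ.filter (fun x : X => f x = y ∧ f' x = y')).card with hc
  set u : Y → ℝ := fun _ => (Real.sqrt nn)⁻¹ with hu
  set q : Y → ℝ := fun y => (Real.sqrt (Real.sqrt (ℓ y * nn)))⁻¹ with hq
  set w : Y → ℝ := fun y => (Real.sqrt (ℓ y))⁻¹ with hw
  set K : Matrix X Y ℂ := cm f q with hK
  set W : Matrix X Y ℂ := cm f w with hW
  set V : Matrix X Y ℂ := cm f' u with hV
  set S : Matrix X X ℂ := K * Kᴴ with hS
  set N : Matrix Y Y ℂ := Matrix.of (fun y y' => (((c y y' : ℝ) / nn : ℝ) : ℂ)) with hN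
  set G : Matrix Y Y ℂ := N * Nᴴ with hG
  have hSpsd : S.PosSemidef := posSemidef_self_mul_conjTranspose K
  have hGpsd : G.PosSemidef := posSemidef_self_mul_conjTranspose N
  -- the quarter-root squares to the inverse square root
  have hq2 : ∀ y, q y * q y = (Real.sqrt ((ℓ y : ℝ) * nn))⁻¹ := by
    intro y
    rw [hq, ← mul_inv, Real.mul_self_sqrt (Real.sqrt_nonneg _)]
  have hℓnn_pos : ∀ y, 0 < (ℓ y : ℝ) * nn := fun y =>
    mul_pos (by exact_mod_cast hℓpos y) hnpos
  -- σ = V Vᴴ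
  have hσ : hidingState f' = V * Vᴴ := by
    ext x x'
    rw [hV, cm_mul_conjTranspose_cm]
    simp only [hidingState, Matrix.of_apply]
    by_cases h : f' x = f' x'
    · rw [if_pos h, if_pos h, hu, ← Complex.ofReal_mul, ← mul_inv,
        Real.mul_self_sqrt hnpos.le]
      rw [one_div, hnn]
      push_cast
      rfl
    · rw [if_neg h, if_neg h]
  -- Kᴴ K is diagonal
  have hKK : Kᴴ * K = Matrix.diagonal
      (fun y => (((ℓ y : ℝ) * (q y * q y) : ℝ) : ℂ)) := by
    ext y y'
    rw [hK, conjTranspose_cm_mul_cm]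
    by_cases h : y = y'
    · subst h
      rw [Matrix.diagonal_apply_eq]
      have : (Finset.univ.filter (fun x : X => f x = y ∧ f x = y)) =
          (Finset.univ.filter (fun x : X => f x = y)) := by
        apply Finset.filter_congr; intro x _; simp
      rw [this]
      push_cast
      ring
    · rw [Matrix.diagonal_apply_ne _ h]
      have : (Finset.univ.filter (fun x : X => f x = y ∧ f x = y')) = ∅ := by
        apply Finset.filter_false_of_mem
        intro x _ hx
        exact h (hx.1 ▸ hx.2 ▸ rfl)
      rw [this]
      simp
  -- S squares to ρ_f
  have hS2 : S ^ 2 = hidingState f := by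
    rw [pow_two, hS, ← Matrix.mul_assoc, Matrix.mul_assoc K Kᴴ K, hKK]
    have hKd : K * Matrix.diagonal (fun y => (((ℓ y : ℝ) * (q y * q y) : ℝ) : ℂ))
        = cm f (fun y => q y * ((ℓ y : ℝ) * (q y * q y))) := by
      ext x y
      rw [Matrix.mul_diagonal]
      simp only [hK, cm, Matrix.of_apply, ite_mul, zero_mul]
      by_cases h : f x = y
      · rw [if_pos h, if_pos h]; push_cast; ring
      · rw [if_neg h, if_neg h]
    rw [hKd]
    ext x x'
    rw [cm_mul_conjTranspose_cm]
    simp only [hidingState, Matrix.of_apply]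
    by_cases h : f x = f x'
    · rw [if_pos h, if_pos h]
      set y := f x
      have hsc : (q y * ((ℓ y : ℝ) * (q y * q y))) * q y = nn⁻¹ := by
        have h4 : (q y * q y) * (q y * q y) = ((ℓ y : ℝ) * nn)⁻¹ := by
          rw [hq2, ← mul_inv, Real.mul_self_sqrt (hℓnn_pos y).le]
        have hℓne : (ℓ y : ℝ) ≠ 0 := by exact_mod_cast (hℓpos y).ne'
        calc (q y * ((ℓ y : ℝ) * (q y * q y))) * q y
            = (ℓ y : ℝ) * ((q y * q y) * (q y * q y)) := by ring
          _ = (ℓ y : ℝ) * ((ℓ y : ℝ) * nn)⁻¹ := by rw [h4]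
          _ = nn⁻¹ := by field_simp
      rw [← Complex.ofReal_mul, hsc, one_div, hnn]
      push_cast
      rfl
    · rw [if_neg h, if_neg h]
  have hmsqS : msqrt (hidingState f) = S := msqrt_eq hSpsd hS2
  -- the key intertwining identity
  have hkey : S * V = W * N := by
    have h1 : S * V = K * (Kᴴ * V) := by rw [hS, Matrix.mul_assoc]
    ext x y'
    rw [h1, cm_mul_apply, hV, conjTranspose_cm_mul_cm, hW, cm_mul_apply]
    simp only [hN, Matrix.of_apply]
    have hcy : (((Finset.univ.filter (fun x_1 : X => f x_1 = f x ∧ f' x_1 = y')).card : ℕ) : ℂ)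
        = (((c (f x) y' : ℝ)) : ℂ) := by push_cast; rfl
    rw [hcy]
    norm_cast
    set y := f x with hy
    set C : ℝ := (c y y' : ℝ) with hC
    have hb : Real.sqrt nn * Real.sqrt nn = nn := Real.mul_self_sqrt hnpos.le
    have hsplit : Real.sqrt ((ℓ y : ℝ) * nn) = Real.sqrt (ℓ y) * Real.sqrt nn :=
      Real.sqrt_mul (Nat.cast_nonneg _) _
    simp only [hu, hw]
    rw [show q y * (q y * (Real.sqrt nn)⁻¹ * C) = (q y * q y) * (Real.sqrt nn)⁻¹ * C from by
      ring]
    rw [hq2, hsplit, mul_inv]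
    rw [show (Real.sqrt (ℓ y : ℝ))⁻¹ * (Real.sqrt nn)⁻¹ * (Real.sqrt nn)⁻¹ * C
        = (Real.sqrt (ℓ y : ℝ))⁻¹ * (C * (Real.sqrt nn * Real.sqrt nn)⁻¹) from by
      rw [mul_inv]; ring]
    rw [hb]
    ring
  -- Wᴴ W = 1
  have hWW : Wᴴ * W = (1 : Matrix Y Y ℂ) := by
    ext y y'
    rw [hW, conjTranspose_cm_mul_cm]
    by_cases h : y = y'
    · subst h
      have : (Finset.univ.filter (fun x : X => f x = y ∧ f x = y)) =
          (Finset.univ.filter (fun x : X => f x = y)) := by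
        apply Finset.filter_congr; intro x _; simp
      rw [this, Matrix.one_apply_eq, hw]
      rw [← Complex.ofReal_mul, ← mul_inv, Real.mul_self_sqrt (Nat.cast_nonneg _)]
      rw [show ((Finset.univ.filter (fun x : X => f x = y)).card : ℂ)
          = (((ℓ y : ℝ)) : ℂ) from by push_cast; rfl]
      rw [← Complex.ofReal_mul]
      have hℓne : (ℓ y : ℝ) ≠ 0 := by exact_mod_cast (hℓpos y).ne'
      rw [inv_mul_cancel₀ hℓne]
      simp
    · have : (Finset.univ.filter (fun x : X => f x = y ∧ f x = y')) = ∅ := by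
        apply Finset.filter_false_of_mem
        intro x _ hx
        exact h (hx.1 ▸ hx.2 ▸ rfl)
      rw [this, Matrix.one_apply_ne h]
      simp
  -- A = W G Wᴴ
  have hA : S * hidingState f' * S = W * G * Wᴴ := by
    rw [hσ]
    calc S * (V * Vᴴ) * S = S * V * (Vᴴ * Sᴴ) := by
          rw [hSpsd.isHermitian.eq]; simp only [Matrix.mul_assoc]
      _ = W * N * (W * N)ᴴ := by rw [← conjTranspose_mul, hkey]
      _ = W * G * Wᴴ := by
          rw [conjTranspose_mul, hG]; simp only [Matrix.mul_assoc]
  -- msqrt A = W √G Wᴴ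
  have hGs : msqrt G = msqrt G := rfl
  have hmsqA : msqrt (S * hidingState f' * S) = W * msqrt G * Wᴴ := by
    have h1 : (W * msqrt G * Wᴴ).PosSemidef := by
      rw [hGs]; exact PosSemidef.mul_mul_conjTranspose_same (msqrt_psd hGpsd) W
    have h2 : (W * msqrt G * Wᴴ) ^ 2 = S * hidingState f' * S := by
      rw [pow_two]
      calc W * msqrt G * Wᴴ * (W * msqrt G * Wᴴ)
          = W * msqrt G * (Wᴴ * W) * (msqrt G * Wᴴ) := by
            simp only [Matrix.mul_assoc]
        _ = W * msqrt G * (msqrt G * Wᴴ) := by rw [hWW, Matrix.mul_one]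
        _ = W * (msqrt G * msqrt G) * Wᴴ := by simp only [Matrix.mul_assoc]
        _ = W * G * Wᴴ := by rw [msqrt_mul_self hGpsd]
        _ = S * hidingState f' * S := hA.symm
    exact msqrt_eq h1 h2
  -- fidelity equals re-trace of msqrt G
  have hfid : fidelity (hidingState f) (hidingState f') = ((msqrt G).trace).re := by
    rw [fidelity, hmsqS, hmsqA]
    congr 1
    rw [trace_mul_cycle W (msqrt G) Wᴴ, hWW, Matrix.one_mul]
  -- diagonal of G
  have hGdiag : ∀ y : Y, (G y y).re = ∑ y' : Y, ((c y y' : ℝ) / nn) ^ 2 := by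
    intro y
    rw [hG, Matrix.mul_apply, Complex.re_sum]
    refine Finset.sum_congr rfl fun y' _ => ?_
    simp only [hN, conjTranspose_apply, Matrix.of_apply, Complex.star_def,
      Complex.conj_ofReal, ← Complex.ofReal_mul, Complex.ofReal_re]
    ring
  constructor
  · rw [hfid]; exact trace_msqrt_re_nonneg hGpsd
  · rw [hfid]
    refine le_trans (trace_msqrt_le hGpsd) ?_
    refine le_of_eq (Finset.sum_congr rfl fun y _ => ?_)
    rw [hGdiag y]

end mainlemma

/-- If for every `y'` the number of `y` with `|L_f(y) ∩ L_{f'}(y')| ≥ α`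
(for some `y'`) is at most `β|Y|`, and `γ ≤ |L_f(y)| ≤ δ` for all `y`, then
`F(ρ_f,ρ_{f'})² ≤ α²|Y|²/(γ|X|) + βδ|Y|/|X|`. -/
theorem stmt_1 {X Y : Type*} [Fintype X] [Fintype Y] [DecidableEq X] [DecidableEq Y]
    [Nonempty X] [Nonempty Y] (f f' : X → Y) (hf : Function.Surjective f)
    (α β γ δ : ℝ) (hα : 0 < α) (hβ : 0 < β) (hγ : 0 < γ) (hδ : 0 < δ)
    (hcount : ((Finset.univ.filter (fun y : Y => ∃ y' : Y,
        α ≤ ((Finset.univ.filter (fun x : X => f x = y ∧ f' x = y')).card : ℝ))).card : ℝ)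
      ≤ β * (Fintype.card Y : ℝ))
    (hlower : ∀ y : Y, γ ≤ ((Finset.univ.filter (fun x : X => f x = y)).card : ℝ))
    (hupper : ∀ y : Y, ((Finset.univ.filter (fun x : X => f x = y)).card : ℝ) ≤ δ) :
    (fidelity (hidingState f) (hidingState f')) ^ 2 ≤
      α ^ 2 * (Fintype.card Y : ℝ) ^ 2 / (γ * (Fintype.card X : ℝ))
        + β * δ * (Fintype.card Y : ℝ) / (Fintype.card X : ℝ) := by
  classical
  obtain ⟨hF0, hF1⟩ := fidelity_hiding_le f f' hf
  set nn : ℝ := (Fintype.card X : ℝ) with hnn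
  set mY : ℝ := (Fintype.card Y : ℝ) with hmY
  have hnpos : 0 < nn := by simp only [hnn]; exact_mod_cast Fintype.card_pos
  have hmYpos : 0 < mY := by simp only [hmY]; exact_mod_cast Fintype.card_pos
  set c : Y → Y → ℝ :=
    fun y y' => ((Finset.univ.filter (fun x : X => f x = y ∧ f' x = y')).card : ℝ) with hc
  set lr : Y → ℝ := fun y => ((Finset.univ.filter (fun x : X => f x = y)).card : ℝ) with hlr
  have hlrpos : ∀ y, 0 < lr y := fun y => lt_of_lt_of_le hγ (hlower y)
  have hcnonneg : ∀ y y', 0 ≤ c y y' := fun y y' => Nat.cast_nonneg _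
  set g : Y → ℝ := fun y => ∑ y' : Y, (c y y' / nn) ^ 2 with hg
  have hgnonneg : ∀ y, 0 ≤ g y := fun y => Finset.sum_nonneg fun y' _ => sq_nonneg _
  -- row sums of c
  have hrow : ∀ y, ∑ y' : Y, c y y' = lr y := by
    intro y
    simp only [hc, hlr]
    rw [← Nat.cast_sum]
    congr 1
    rw [Finset.card_eq_sum_card_fiberwise (f := f') (t := Finset.univ)
      (fun x _ => Finset.mem_univ _)]
    refine Finset.sum_congr rfl fun y' _ => ?_
    congr 1
    rw [Finset.filter_filter]
  -- total size
  have htot : ∑ y : Y, lr y = nn := by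
    simp only [hlr, hnn]
    rw [← Nat.cast_sum]
    congr 1
    rw [← Finset.card_univ (α := X),
      Finset.card_eq_sum_card_fiberwise (f := f) (t := Finset.univ)
      (fun x _ => Finset.mem_univ _)]
  -- step 1 : F² ≤ (∑ √g)²
  have h1 : (fidelity (hidingState f) (hidingState f')) ^ 2
      ≤ (∑ y : Y, Real.sqrt (g y)) ^ 2 := by
    refine pow_le_pow_left₀ hF0 ?_ 2
    exact hF1
  -- step 2 : Cauchy–Schwarz
  have h2 : (∑ y : Y, Real.sqrt (g y)) ^ 2 ≤ nn * ∑ y : Y, g y / lr y := by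
    have hrw : ∀ y : Y, Real.sqrt (g y)
        = Real.sqrt (lr y) * Real.sqrt (g y / lr y) := by
      intro y
      rw [← Real.sqrt_mul (hlrpos y).le]
      congr 1
      rw [mul_comm, div_mul_cancel₀ _ (hlrpos y).ne']
    calc (∑ y : Y, Real.sqrt (g y)) ^ 2
        = (∑ y : Y, Real.sqrt (lr y) * Real.sqrt (g y / lr y)) ^ 2 := by
          rw [Finset.sum_congr rfl fun y _ => hrw y]
      _ ≤ (∑ y : Y, Real.sqrt (lr y) ^ 2) * ∑ y : Y, Real.sqrt (g y / lr y) ^ 2 :=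
          Finset.sum_mul_sq_le_sq_mul_sq _ _ _
      _ = nn * ∑ y : Y, g y / lr y := by
          rw [Finset.sum_congr rfl fun y (_ : y ∈ Finset.univ) =>
              Real.sq_sqrt (hlrpos y).le,
            Finset.sum_congr rfl fun y (_ : y ∈ Finset.univ) =>
              Real.sq_sqrt (div_nonneg (hgnonneg y) (hlrpos y).le), htot]
  -- step 3 : split into good and bad y's
  set P : Y → Prop := fun y : Y => ∃ y' : Y,
    α ≤ ((Finset.univ.filter (fun x : X => f x = y ∧ f' x = y')).card : ℝ) with hP
  have h3 : ∑ y : Y, g y / lr y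
      ≤ β * mY * (δ / nn ^ 2) + mY * (mY * α ^ 2 / nn ^ 2 / γ) := by
    rw [← Finset.sum_filter_add_sum_filter_not Finset.univ P (fun y => g y / lr y)]
    have hbad : ∑ y ∈ Finset.univ.filter P, g y / lr y ≤ β * mY * (δ / nn ^ 2) := by
      have hone : ∀ y ∈ Finset.univ.filter P, g y / lr y ≤ δ / nn ^ 2 := by
        intro y _
        have hgy : g y ≤ lr y ^ 2 / nn ^ 2 := by
          simp only [hg]
          calc ∑ y' : Y, (c y y' / nn) ^ 2
              = (∑ y' : Y, c y y' ^ 2) / nn ^ 2 := by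
                rw [Finset.sum_div]
                exact Finset.sum_congr rfl fun y' _ => by rw [div_pow]
            _ ≤ (∑ y' : Y, c y y') ^ 2 / nn ^ 2 := by
                exact (div_le_div_iff_of_pos_right (by positivity)).mpr
                  (Finset.sum_sq_le_sq_sum_of_nonneg fun y' _ => hcnonneg y y')
            _ = lr y ^ 2 / nn ^ 2 := by rw [hrow]
        calc g y / lr y ≤ (lr y ^ 2 / nn ^ 2) / lr y :=
              (div_le_div_iff_of_pos_right (hlrpos y)).mpr hgy
          _ = lr y / nn ^ 2 := by
              field_simp [(hlrpos y).ne', hnpos.ne']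
          _ ≤ δ / nn ^ 2 := (div_le_div_iff_of_pos_right (by positivity)).mpr (hupper y)
      calc ∑ y ∈ Finset.univ.filter P, g y / lr y
          ≤ ((Finset.univ.filter P).card : ℝ) * (δ / nn ^ 2) := by
            have := Finset.sum_le_card_nsmul (Finset.univ.filter P)
              (fun y => g y / lr y) (δ / nn ^ 2) hone
            simpa [nsmul_eq_mul] using this
        _ ≤ β * mY * (δ / nn ^ 2) := by
            apply mul_le_mul_of_nonneg_right ?_ (by positivity)
            exact hcount
    have hgood : ∑ y ∈ Finset.univ.filter (fun y => ¬ P y), g y / lr y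
        ≤ mY * (mY * α ^ 2 / nn ^ 2 / γ) := by
      have hone : ∀ y ∈ Finset.univ.filter (fun y => ¬ P y),
          g y / lr y ≤ mY * α ^ 2 / nn ^ 2 / γ := by
        intro y hy
        have hnP : ¬ P y := (Finset.mem_filter.mp hy).2
        have hsmall : ∀ y', c y y' < α := by
          intro y'
          by_contra hcon
          exact hnP ⟨y', le_of_not_gt hcon⟩
        have hgy : g y ≤ mY * α ^ 2 / nn ^ 2 := by
          simp only [hg]
          calc ∑ y' : Y, (c y y' / nn) ^ 2
              ≤ ∑ y' : Y, α ^ 2 / nn ^ 2 := by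
                refine Finset.sum_le_sum fun y' _ => ?_
                rw [div_pow]
                exact (div_le_div_iff_of_pos_right (by positivity)).mpr
                  (pow_le_pow_left₀ (hcnonneg y y') (hsmall y').le 2)
            _ = mY * α ^ 2 / nn ^ 2 := by
                rw [Finset.sum_const, Finset.card_univ, nsmul_eq_mul, hmY]
                ring
        calc g y / lr y ≤ (mY * α ^ 2 / nn ^ 2) / γ := by
              apply div_le_div₀ (by positivity) hgy hγ (hlower y)
          _ = mY * α ^ 2 / nn ^ 2 / γ := rfl
      calc ∑ y ∈ Finset.univ.filter (fun y => ¬ P y), g y / lr y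
          ≤ ((Finset.univ.filter (fun y => ¬ P y)).card : ℝ)
              * (mY * α ^ 2 / nn ^ 2 / γ) := by
            have := Finset.sum_le_card_nsmul (Finset.univ.filter (fun y => ¬ P y))
              (fun y => g y / lr y) (mY * α ^ 2 / nn ^ 2 / γ) hone
            simpa [nsmul_eq_mul] using this
        _ ≤ mY * (mY * α ^ 2 / nn ^ 2 / γ) := by
            apply mul_le_mul_of_nonneg_right ?_ (by positivity)
            calc ((Finset.univ.filter (fun y => ¬ P y)).card : ℝ)
                ≤ ((Finset.univ : Finset Y).card : ℝ) := by
                  exact_mod_cast Finset.card_le_card (Finset.filter_subset _ _)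
              _ = mY := by rw [Finset.card_univ, hmY]
    exact add_le_add hbad hgood
  -- combine
  have hfinal : nn * (β * mY * (δ / nn ^ 2) + mY * (mY * α ^ 2 / nn ^ 2 / γ))
      = α ^ 2 * mY ^ 2 / (γ * nn) + β * δ * mY / nn := by
    field_simp
    ring
  calc (fidelity (hidingState f) (hidingState f')) ^ 2
      ≤ nn * ∑ y : Y, g y / lr y := le_trans h1 h2
    _ ≤ nn * (β * mY * (δ / nn ^ 2) + mY * (mY * α ^ 2 / nn ^ 2 / γ)) :=
        mul_le_mul_of_nonneg_left h3 hnpos.le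
    _ = α ^ 2 * mY ^ 2 / (γ * nn) + β * δ * mY / nn := hfinal
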